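/- arXiv:1909.02995 — 3 statements merged into one kernel-verified Lean document; each statement's English description precedes it below -/
import Mathlib

section
/- Let f : ℝ → ℝ be a measurable function and suppose there exist positive real constants A and λ such that |f(t)| ≤ A·exp(-λ|t|) for all real t. Then the Fourier transform F(x) = ∫_ℝ f(t)·exp(-2πi·x·t) dt extends to a holomorphic function of x on the horizontal strip {x ∈ ℂ : |Im x| < λ/(2π)}. -/
open MeasureTheory Complex Set

lemma my_integrable_exp_neg_mul_abs {c : ℝ} (hc : 0 < c) :
    Integrable (fun t : ℝ => Real.exp (-c * |t|)) := by
  have key : IntegrableOn (fun t : ℝ => Real.exp (-c * |t|)) (Ici 0) :=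
    (integrableOn_Ici_iff_integrableOn_Ioi (by simp)).2
      ((exp_neg_integrableOn_Ioi 0 hc).congr_fun
        (fun x hx => by rw [_root_.abs_of_pos hx]) measurableSet_Ioi)
  have key2 : IntegrableOn (fun t : ℝ => Real.exp (-c * |t|)) (Iic 0) := by
    have h := (integrable_indicator_iff measurableSet_Ici).2 key
    have h2 := h.comp_neg
    have heq : (fun t : ℝ => (Ici (0:ℝ)).indicator (fun t : ℝ => Real.exp (-c * |t|)) (-t))
        = (Iic (0:ℝ)).indicator (fun t : ℝ => Real.exp (-c * |t|)) := by
      funext t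
      simp only [Set.indicator_apply, Set.mem_Ici, Set.mem_Iic, abs_neg, neg_nonneg]
    rw [heq] at h2
    exact (integrable_indicator_iff measurableSet_Iic).1 h2
  have := key2.union key
  rwa [Iic_union_Ici, integrableOn_univ] at this

lemma my_integrable_abs_mul_exp {c : ℝ} (hc : 0 < c) :
    Integrable (fun t : ℝ => |t| * Real.exp (-c * |t|)) := by
  have hi := (my_integrable_exp_neg_mul_abs (half_pos hc)).const_mul (2 / c)
  refine hi.mono' ?_ ?_
  · exact ((_root_.continuous_abs.mul
      ((continuous_const.mul _root_.continuous_abs).rexp)).aestronglyMeasurable)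
  · filter_upwards with t
    have h1 : |t| ≤ (2 / c) * Real.exp (c / 2 * |t|) := by
      have h2 : c / 2 * |t| ≤ Real.exp (c / 2 * |t|) := (Real.add_one_le_exp _).trans'
        (by linarith)
      calc |t| = (2 / c) * (c / 2 * |t|) := by field_simp
        _ ≤ (2 / c) * Real.exp (c / 2 * |t|) :=
            mul_le_mul_of_nonneg_left h2 (by positivity)
    have habs : |t| * Real.exp (-c * |t|)
        ≤ (2 / c) * Real.exp (c / 2 * |t|) * Real.exp (-c * |t|) :=
      mul_le_mul_of_nonneg_right h1 (Real.exp_pos _).le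
    rw [Real.norm_eq_abs, _root_.abs_of_nonneg (by positivity)]
    calc |t| * Real.exp (-c * |t|)
        ≤ (2 / c) * Real.exp (c / 2 * |t|) * Real.exp (-c * |t|) := habs
      _ = 2 / c * Real.exp (-(c / 2) * |t|) := by
          rw [mul_assoc, ← Real.exp_add]; ring_nf

lemma exp_re_calc (x : ℂ) (t : ℝ) :
    ‖Complex.exp (-2 * Real.pi * Complex.I * x * t)‖ = Real.exp (2 * Real.pi * x.im * t) := by
  rw [Complex.norm_exp]
  congr 1
  simp [Complex.mul_re, Complex.mul_im]

/-- a measurable function with exponential decay has a Fourier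
transform that extends holomorphically to the strip `|Im x| < λ/(2π)`. -/
theorem fourier_transform_holomorphic_on_strip
    (f : ℝ → ℝ) (hf : Measurable f) (A lam : ℝ) (hA : 0 < A) (hlam : 0 < lam)
    (hbound : ∀ t : ℝ, |f t| ≤ A * Real.exp (-lam * |t|)) :
    ∃ F : ℂ → ℂ,
      DifferentiableOn ℂ F {x : ℂ | |x.im| < lam / (2 * Real.pi)} ∧
      ∀ x : ℝ, F (x : ℂ) =
        ∫ t : ℝ, (f t : ℂ) * Complex.exp (-2 * Real.pi * Complex.I * x * t) := by
  have hπ : (0:ℝ) < Real.pi := Real.pi_pos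
  set g : ℂ → ℝ → ℂ := fun x t => (f t : ℂ) * Complex.exp (-2 * Real.pi * Complex.I * x * t)
    with hg
  set g' : ℂ → ℝ → ℂ := fun x t =>
    (f t : ℂ) * (-2 * Real.pi * Complex.I * t * Complex.exp (-2 * Real.pi * Complex.I * x * t))
    with hg'
  refine ⟨fun x => ∫ t : ℝ, g x t, ?_, fun x => rfl⟩
  intro x₀ hx₀
  apply DifferentiableAt.differentiableWithinAt
  simp only [Set.mem_setOf_eq] at hx₀
  set b := |x₀.im| with hb
  set δ := lam / (2 * Real.pi) - b with hδ
  have hδpos : 0 < δ := by simp only [hδ]; linarith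
  set ε := δ / 2 with hε
  have hεpos : 0 < ε := by positivity
  have h2piδ : 2 * Real.pi * δ = lam - 2 * Real.pi * b := by
    rw [hδ]; field_simp
  have hmeas : ∀ x : ℂ, AEStronglyMeasurable (g x) volume := by
    intro x
    apply Measurable.aestronglyMeasurable
    exact (Complex.measurable_ofReal.comp hf).mul
      (Complex.measurable_exp.comp (by fun_prop))
  have hmeas' : ∀ x : ℂ, AEStronglyMeasurable (g' x) volume := by
    intro x
    apply Measurable.aestronglyMeasurable
    exact (Complex.measurable_ofReal.comp hf).mul
      ((by fun_prop : Measurable fun t : ℝ => (-2 * Real.pi * Complex.I * t : ℂ)).mul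
        (Complex.measurable_exp.comp (by fun_prop)))
  have him_bound : ∀ x ∈ Metric.ball x₀ ε, |x.im| ≤ b + ε := by
    intro x hx
    have h1 : |x.im - x₀.im| ≤ ‖x - x₀‖ := by
      rw [← Complex.sub_im]; exact Complex.abs_im_le_norm _
    have h2 : ‖x - x₀‖ < ε := by rwa [Metric.mem_ball, dist_eq_norm] at hx
    calc |x.im| = |x₀.im + (x.im - x₀.im)| := by ring_nf
      _ ≤ |x₀.im| + |x.im - x₀.im| := abs_add_le _ _
      _ ≤ b + ε := add_le_add le_rfl (h1.trans h2.le)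
  have hfc : ∀ t : ℝ, ‖(f t : ℂ)‖ ≤ A * Real.exp (-lam * |t|) := by
    intro t
    rw [Complex.norm_real, Real.norm_eq_abs]
    exact hbound t
  have hexp_le : ∀ (x : ℂ) (t : ℝ) (B : ℝ), |x.im| ≤ B →
      Real.exp (2 * Real.pi * x.im * t) ≤ Real.exp (2 * Real.pi * B * |t|) := by
    intro x t B hB
    apply Real.exp_le_exp.2
    calc 2 * Real.pi * x.im * t ≤ |2 * Real.pi * x.im * t| := le_abs_self _
      _ = 2 * Real.pi * |x.im| * |t| := by
          rw [abs_mul, abs_mul, abs_mul, _root_.abs_of_pos two_pos, _root_.abs_of_pos hπ]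
      _ ≤ 2 * Real.pi * B * |t| := by
          apply mul_le_mul_of_nonneg_right _ (abs_nonneg t)
          exact mul_le_mul_of_nonneg_left hB (by positivity)
  have hint : Integrable (g x₀) volume := by
    have hcpos : 0 < lam - 2 * Real.pi * b := by
      rw [← h2piδ]; positivity
    refine ((my_integrable_exp_neg_mul_abs hcpos).const_mul A).mono' (hmeas x₀) ?_
    filter_upwards with t
    calc ‖g x₀ t‖ = ‖(f t : ℂ)‖ * Real.exp (2 * Real.pi * x₀.im * t) := by
          rw [hg]; rw [norm_mul, exp_re_calc]
      _ ≤ (A * Real.exp (-lam * |t|)) * Real.exp (2 * Real.pi * b * |t|) :=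
          mul_le_mul (hfc t) (hexp_le x₀ t b le_rfl) (Real.exp_pos _).le (by positivity)
      _ = A * Real.exp (-(lam - 2 * Real.pi * b) * |t|) := by
          rw [mul_assoc, ← Real.exp_add]; congr 2; ring
  set c := Real.pi * δ with hc
  have hcpos : 0 < c := by positivity
  have hkey : lam - 2 * Real.pi * (b + ε) = c := by
    rw [hc, hε]; linear_combination -h2piδ
  set bound : ℝ → ℝ := fun t => 2 * Real.pi * A * (|t| * Real.exp (-c * |t|)) with hbd
  have key := hasDerivAt_integral_of_dominated_loc_of_deriv_le (F := g) (F' := g')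
    (x₀ := x₀) (bound := bound) (Metric.ball_mem_nhds x₀ hεpos)
    (Filter.Eventually.of_forall fun x => hmeas x)
    hint (hmeas' x₀) ?_ ?_ ?_
  · exact key.2.differentiableAt
  · filter_upwards with t
    intro x hx
    have hxim : |x.im| ≤ b + ε := him_bound x hx
    have h1 : ‖(-2 * (Real.pi:ℂ) * Complex.I * t : ℂ)‖ = 2 * Real.pi * |t| := by
      rw [show (-2 * (Real.pi:ℂ) * Complex.I * t : ℂ)
          = ((2 * Real.pi * t : ℝ) : ℂ) * (-Complex.I) by push_cast; ring]
      rw [norm_mul, norm_neg, Complex.norm_I, mul_one, Complex.norm_real, Real.norm_eq_abs,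
        abs_mul, abs_mul, _root_.abs_of_pos two_pos, _root_.abs_of_pos hπ]
    calc ‖g' x t‖ = ‖(f t : ℂ)‖ * (2 * Real.pi * |t|) * Real.exp (2 * Real.pi * x.im * t) := by
          rw [hg']; rw [norm_mul, norm_mul, exp_re_calc, h1]; ring
      _ ≤ (A * Real.exp (-lam * |t|)) * (2 * Real.pi * |t|)
            * Real.exp (2 * Real.pi * (b + ε) * |t|) := by
          apply mul_le_mul _ (hexp_le x t (b + ε) hxim) (Real.exp_pos _).le (by positivity)
          exact mul_le_mul_of_nonneg_right (hfc t) (by positivity)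
      _ = bound t := by
          rw [hbd]
          have : Real.exp (-lam * |t|) * Real.exp (2 * Real.pi * (b + ε) * |t|)
              = Real.exp (-c * |t|) := by
            rw [← Real.exp_add]; congr 1; rw [← hkey]; ring
          calc A * Real.exp (-lam * |t|) * (2 * Real.pi * |t|)
                * Real.exp (2 * Real.pi * (b + ε) * |t|)
              = 2 * Real.pi * A * (|t| * (Real.exp (-lam * |t|)
                * Real.exp (2 * Real.pi * (b + ε) * |t|))) := by ring
            _ = 2 * Real.pi * A * (|t| * Real.exp (-c * |t|)) := by rw [this]
  · exact (my_integrable_abs_mul_exp hcpos).const_mul (2 * Real.pi * A)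
  · filter_upwards with t
    intro x hx
    simp only [hg, hg']
    have h0 : HasDerivAt (fun y : ℂ => -2 * (Real.pi:ℂ) * Complex.I * t * y)
        (-2 * (Real.pi:ℂ) * Complex.I * t) x := by
      simpa using (hasDerivAt_id x).const_mul (-2 * (Real.pi:ℂ) * Complex.I * (t:ℂ))
    have h3 := (h0.cexp).const_mul ((f t : ℂ))
    have hder : HasDerivAt
        (fun y : ℂ => (f t : ℂ) * Complex.exp (-2 * Real.pi * Complex.I * y * t))
        ((f t : ℂ) * (Complex.exp (-2 * (Real.pi:ℂ) * Complex.I * t * x)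
          * (-2 * (Real.pi:ℂ) * Complex.I * t))) x := by
      apply HasDerivAt.congr_of_eventuallyEq h3
      filter_upwards with y
      congr 2
      ring
    convert hder using 1
    any_goals rfl
    rw [show (-2 * (Real.pi:ℂ) * Complex.I * (t:ℂ) * x)
        = -2 * Real.pi * Complex.I * x * t from by ring]
    ring
end

section
/- Consider the Hamiltonian G_ε(q,p,s,S) = H(q, p/s) + F_ε(S) + T·ln(s) on {s > 0}, where F_ε(S) = F(εS). Under the change of variables ρ = p/s, ξ = εS, and time reparameterization dτ = s·dt, Hamilton's equations for G_ε become q' = H₂(q,ρ), ρ' = −H₁(q,ρ) − ε·ρ·F'(ξ), ξ' = ε·(−T + ρ·H₂(q,ρ)), together with s' = ε·s·F'(ξ), where ' denotes d/dτ and H₁, H₂ are the partial derivatives of H in its first and second arguments. -/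
/-- Hoover reduction: solutions of Hamilton's equations for
`G_ε(q,p,s,S) = H(q, p/s) + F(εS) + T ln s` on `{s > 0}` become, after the
substitution `ρ = p/s`, `ξ = εS` and the time reparameterization `dt/dτ = s`,
solutions of the thermostated system
`q' = H₂`, `ρ' = −H₁ − ερF'(ξ)`, `ξ' = ε(−T + ρH₂)`, `s' = εsF'(ξ)`. -/
theorem hoover_reduction
    (H : ℝ × ℝ → ℝ) (F : ℝ → ℝ) (hH : ContDiff ℝ 2 H) (hF : ContDiff ℝ 2 F)
    (T ε : ℝ) (q p s S : ℝ → ℝ) (hs : ∀ t, 0 < s t)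
    (hq : ∀ t, HasDerivAt q (fderiv ℝ H (q t, p t / s t) (0, 1) / s t) t)
    (hp : ∀ t, HasDerivAt p (-(fderiv ℝ H (q t, p t / s t) (1, 0))) t)
    (hsd : ∀ t, HasDerivAt s (ε * deriv F (ε * S t)) t)
    (hS : ∀ t, HasDerivAt S
      (fderiv ℝ H (q t, p t / s t) (0, 1) * p t / (s t) ^ 2 - T / s t) t)
    (σ : ℝ → ℝ) (hσ : ∀ τ, HasDerivAt σ (s (σ τ)) τ) :
    let Q : ℝ → ℝ := fun τ => q (σ τ)
    let ρ : ℝ → ℝ := fun τ => p (σ τ) / s (σ τ)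
    let ξ : ℝ → ℝ := fun τ => ε * S (σ τ)
    let sτ : ℝ → ℝ := fun τ => s (σ τ)
    ∀ τ,
      HasDerivAt Q (fderiv ℝ H (Q τ, ρ τ) (0, 1)) τ ∧
      HasDerivAt ρ (-(fderiv ℝ H (Q τ, ρ τ) (1, 0)) - ε * ρ τ * deriv F (ξ τ)) τ ∧
      HasDerivAt ξ (ε * (-T + ρ τ * fderiv ℝ H (Q τ, ρ τ) (0, 1))) τ ∧
      HasDerivAt sτ (ε * sτ τ * deriv F (ξ τ)) τ := by
  intro Q ρ ξ sτ τ
  have hsne : s (σ τ) ≠ 0 := (hs (σ τ)).ne'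
  set t := σ τ with ht
  have hQ : HasDerivAt Q (fderiv ℝ H (Q τ, ρ τ) (0, 1)) τ := by
    have := (hq t).comp τ (hσ τ)
    convert this using 1
    · rfl
    · rfl
    · rfl
    field_simp
    rfl
  refine ⟨hQ, ?_, ?_, ?_⟩
  · have := ((hp t).div (hsd t) hsne).comp τ (hσ τ)
    convert this using 1
    · rfl
    · rfl
    · rfl
    show -(fderiv ℝ H (q t, p t / s t) (1, 0)) - ε * (p t / s t) * deriv F (ε * S t) = _
    field_simp
    ring
  · have := ((hS t).const_mul ε).comp τ (hσ τ)
    convert this using 1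
    · rfl
    · rfl
    · rfl
    show ε * (-T + p t / s t * fderiv ℝ H (q t, p t / s t) (0, 1)) = _
    field_simp
    ring
  · have := (hsd t).comp τ (hσ τ)
    convert this using 1
    · rfl
    · rfl
    · rfl
    show ε * s t * deriv F (ε * S t) = _
    ring
end

section
/- Let f(t) = 4 sech(t)², α > 0, and z₀ ∈ ℂ with z₀ ≠ 0. Then the Melnikov function M(t₀) = (1/(2α))·Ω(exp(2iα²t₀)z₀, f̂(α²/π)) (with f̂ the Fourier transform and Ω(z',z) = Im(z'·conj(z))) is a nonzero sinusoidal function of t₀; in particular it has a zero t₀* at which M'(t₀*) ≠ 0. -/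
open MeasureTheory Complex

noncomputable def sig (t : ℝ) : ℝ := (1 + Real.exp (-2*t))⁻¹
noncomputable def sig' (t : ℝ) : ℝ := 2 * Real.exp (-2*t) / (1 + Real.exp (-2*t))^2

lemma one_add_exp_pos (t : ℝ) : 0 < 1 + Real.exp (-2*t) := by positivity

lemma sig_pos (t : ℝ) : 0 < sig t := by
  unfold sig; exact inv_pos.mpr (one_add_exp_pos t)

lemma sig_lt_one (t : ℝ) : sig t < 1 := by
  unfold sig
  rw [inv_lt_one_iff₀]
  right
  linarith [Real.exp_pos (-2*t)]

lemma sig'_pos (t : ℝ) : 0 < sig' t := by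
  unfold sig'; positivity

lemma sig_hasDerivAt (t : ℝ) : HasDerivAt sig (sig' t) t := by
  have h1 : HasDerivAt (fun t : ℝ => 1 + Real.exp (-2*t))
      (Real.exp (-2*t) * (-2)) t := by
    simpa using (((hasDerivAt_id t).const_mul (-2)).exp).const_add 1
  have h2 := h1.inv (ne_of_gt (one_add_exp_pos t))
  refine h2.congr_deriv ?_
  unfold sig'
  field_simp

lemma sig_injective : Function.Injective sig := by
  intro a b hab
  unfold sig at hab
  have := inv_injective hab
  have h2 : Real.exp (-2*a) = Real.exp (-2*b) := by linarith
  have := Real.exp_injective h2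
  linarith

lemma sig_range : sig '' Set.univ = Set.Ioo (0:ℝ) 1 := by
  rw [Set.image_univ]
  ext y
  constructor
  · rintro ⟨t, rfl⟩
    exact ⟨sig_pos t, sig_lt_one t⟩
  · rintro ⟨hy0, hy1⟩
    refine ⟨-(Real.log (y⁻¹ - 1))/2, ?_⟩
    have hy : 1 < y⁻¹ := (one_lt_inv₀ hy0).mpr hy1
    unfold sig
    have : -2 * (-(Real.log (y⁻¹ - 1))/2) = Real.log (y⁻¹ - 1) := by ring
    rw [this, Real.exp_log (by linarith)]
    have hy0' : y ≠ 0 := ne_of_gt hy0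
    field_simp
    ring

noncomputable def gfun (z : ℂ) (x : ℝ) : ℂ := (x:ℂ)^(-z) * ((1:ℂ)-(x:ℂ))^z

-- pointwise identity
lemma pointwise (α : ℝ) (t : ℝ) :
    ((4 / Real.cosh t ^ 2 : ℝ) : ℂ) *
      Complex.exp (-2 * Real.pi * Complex.I * (α ^ 2 / Real.pi) * t) =
    8 * (|sig' t| • gfun (Complex.I * α^2) (sig t)) := by
  have hπ : (Real.pi : ℂ) ≠ 0 := ofReal_ne_zero.mpr Real.pi_ne_zero
  have habs : |sig' t| = sig' t := abs_of_pos (sig'_pos t)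
  have hcosh : (4 / Real.cosh t ^ 2 : ℝ) = 8 * sig' t := by
    unfold sig'
    rw [Real.cosh_eq]
    have he : Real.exp (-2*t) = Real.exp (-t) * Real.exp (-t) := by
      rw [← Real.exp_add]; ring_nf
    have h1 : Real.exp (-t) = (Real.exp t)⁻¹ := Real.exp_neg t
    have hexp := Real.exp_pos t
    rw [he, h1]
    field_simp
    ring
  -- exponential part
  have hexp2 : Complex.exp (-2 * Real.pi * Complex.I * (α ^ 2 / Real.pi) * t)
      = Complex.exp ((Real.log ((1 - sig t)/(sig t)) : ℝ) * (Complex.I * α^2)) := by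
    have hratio : (1 - sig t)/(sig t) = Real.exp (-2*t) := by
      unfold sig
      have := one_add_exp_pos t
      field_simp
      ring
    rw [hratio, Real.log_exp]
    congr 1
    field_simp
    push_cast
    ring
  have hg : gfun (Complex.I * α^2) (sig t)
      = Complex.exp ((Real.log ((1 - sig t)/(sig t)) : ℝ) * (Complex.I * α^2)) := by
    unfold gfun
    set z : ℂ := Complex.I * α^2
    have h0 : (sig t : ℂ) ≠ 0 := ofReal_ne_zero.mpr (ne_of_gt (sig_pos t))
    have h1 : ((1:ℂ) - (sig t : ℂ)) ≠ 0 := by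
      rw [show ((1:ℂ) - (sig t:ℂ)) = ((1 - sig t : ℝ) : ℂ) by push_cast; ring]
      exact ofReal_ne_zero.mpr (ne_of_gt (by linarith [sig_lt_one t]))
    rw [cpow_def_of_ne_zero h0, cpow_def_of_ne_zero h1, ← Complex.exp_add]
    congr 1
    have hl0 : Complex.log (sig t : ℂ) = (Real.log (sig t) : ℂ) :=
      (Complex.ofReal_log (le_of_lt (sig_pos t))).symm
    have hl1 : Complex.log ((1:ℂ) - (sig t:ℂ)) = (Real.log (1 - sig t) : ℂ) := by
      rw [show ((1:ℂ) - (sig t:ℂ)) = ((1 - sig t : ℝ) : ℂ) by push_cast; ring]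
      exact (Complex.ofReal_log (by linarith [sig_lt_one t])).symm
    rw [hl0, hl1, Real.log_div (by linarith [sig_lt_one t]) (ne_of_gt (sig_pos t))]
    push_cast
    ring
  rw [habs, hcosh, hexp2, ← hg, real_smul]
  push_cast
  ring

lemma integral_gfun (α : ℝ) :
    ∫ x in Set.Ioo (0:ℝ) 1, gfun (Complex.I * α^2) x
      = Complex.betaIntegral (1 - Complex.I * α^2) (1 + Complex.I * α^2) := by
  rw [Complex.betaIntegral, intervalIntegral.integral_of_le (by norm_num : (0:ℝ) ≤ 1),
    ← integral_Ioc_eq_integral_Ioo]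
  congr 1
  ext x
  unfold gfun
  rw [show (1:ℂ) - Complex.I * α^2 - 1 = -(Complex.I * α^2) by ring,
    show (1:ℂ) + Complex.I * α^2 - 1 = Complex.I * α^2 by ring]

lemma fhat_eq (α : ℝ) :
    (∫ t : ℝ, ((4 / Real.cosh t ^ 2 : ℝ) : ℂ) *
      Complex.exp (-2 * Real.pi * Complex.I * (α ^ 2 / Real.pi) * t)) =
    8 * (Complex.Gamma (1 - Complex.I * α^2) * Complex.Gamma (1 + Complex.I * α^2)) := by
  have hsub : ∫ x in Set.Ioo (0:ℝ) 1, gfun (Complex.I * α^2) x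
      = ∫ t : ℝ, |sig' t| • gfun (Complex.I * α^2) (sig t) := by
    rw [← sig_range, integral_image_eq_integral_abs_deriv_smul MeasurableSet.univ
      (fun x _ => (sig_hasDerivAt x).hasDerivWithinAt)
      (Set.injOn_of_injective sig_injective), setIntegral_univ]
  have hGB := Complex.Gamma_mul_Gamma_eq_betaIntegral
    (s := 1 - Complex.I * α^2) (t := 1 + Complex.I * α^2) (by simp [← Complex.ofReal_pow]) (by simp [← Complex.ofReal_pow])
  have h2 : (1 - Complex.I * α^2) + (1 + Complex.I * α^2) = 2 := by ring
  rw [h2] at hGB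
  have hG2 : Complex.Gamma 2 = 1 := by
    rw [show (2:ℂ) = 1 + 1 by norm_num, Complex.Gamma_add_one 1 one_ne_zero,
      Complex.Gamma_one, mul_one]
  rw [hG2, one_mul] at hGB
  calc (∫ t : ℝ, ((4 / Real.cosh t ^ 2 : ℝ) : ℂ) *
      Complex.exp (-2 * Real.pi * Complex.I * (α ^ 2 / Real.pi) * t))
      = ∫ t : ℝ, 8 * (|sig' t| • gfun (Complex.I * α^2) (sig t)) := by
        congr 1; ext t; exact pointwise α t
    _ = 8 * ∫ t : ℝ, |sig' t| • gfun (Complex.I * α^2) (sig t) := integral_const_mul 8 _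
    _ = 8 * (Complex.Gamma (1 - Complex.I * α^2) * Complex.Gamma (1 + Complex.I * α^2)) := by
        rw [← hsub, integral_gfun, ← hGB]

/-- for `f(t) = 4 sech(t)²`, `α > 0` and `z₀ ≠ 0`, the Melnikov
function `M(t₀) = (1/(2α))·Ω(exp(2iα²t₀)z₀, f̂(α²/π))` is a nonzero sinusoid;
in particular it has a zero at which its derivative does not vanish. -/
theorem melnikov_nonzero_sinusoid (α : ℝ) (hα : 0 < α) (z₀ : ℂ) (hz₀ : z₀ ≠ 0) :
    let fhat : ℂ := ∫ t : ℝ, ((4 / Real.cosh t ^ 2 : ℝ) : ℂ) *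
      Complex.exp (-2 * Real.pi * Complex.I * (α ^ 2 / Real.pi) * t)
    let M : ℝ → ℝ := fun t₀ =>
      (1 / (2 * α)) * (Complex.exp (2 * Complex.I * α ^ 2 * t₀) * z₀ *
        starRingEnd ℂ fhat).im
    (∃ a b : ℝ, (a ≠ 0 ∨ b ≠ 0) ∧
      ∀ t₀, M t₀ = a * Real.cos (2 * α ^ 2 * t₀) + b * Real.sin (2 * α ^ 2 * t₀)) ∧
    (∃ t₀ : ℝ, M t₀ ≠ 0) ∧
    (∃ ts : ℝ, M ts = 0 ∧ deriv M ts ≠ 0) := by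
  intro fhat M
  have hα2 : α^2 ≠ 0 := pow_ne_zero 2 (ne_of_gt hα)
  have hfhat : fhat ≠ 0 := by
    show (∫ t : ℝ, ((4 / Real.cosh t ^ 2 : ℝ) : ℂ) *
      Complex.exp (-2 * Real.pi * Complex.I * (α ^ 2 / Real.pi) * t)) ≠ 0
    rw [fhat_eq α]
    refine mul_ne_zero (by norm_num) (mul_ne_zero ?_ ?_) <;>
      refine Complex.Gamma_ne_zero_of_re_pos (by simp [← Complex.ofReal_pow])
  set w : ℂ := z₀ * starRingEnd ℂ fhat with hw
  have hwne : w ≠ 0 := mul_ne_zero hz₀ (by simpa using hfhat)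
  have hM : ∀ t₀ : ℝ, M t₀ = (w.im / (2*α)) * Real.cos (2 * α ^ 2 * t₀)
      + (w.re / (2*α)) * Real.sin (2 * α ^ 2 * t₀) := by
    intro t₀
    show (1 / (2 * α)) * (Complex.exp (2 * Complex.I * α ^ 2 * t₀) * z₀ *
        starRingEnd ℂ fhat).im = _
    rw [mul_assoc, ← hw,
      show (2 * Complex.I * (α:ℂ) ^ 2 * (t₀:ℂ)) = ((2 * α ^ 2 * t₀ : ℝ) : ℂ) * Complex.I by
        push_cast; ring,
      Complex.exp_mul_I, ← Complex.ofReal_cos, ← Complex.ofReal_sin]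
    rw [show ∀ (c s : ℝ) (u : ℂ), ((↑c + ↑s*Complex.I) * u).im = c * u.im + s * u.re by
      intros c s u
      simp [add_mul, Complex.add_im, Complex.mul_im]
      try ring]
    ring
  have h2α : (2 * α) ≠ 0 := by positivity
  refine ⟨⟨w.im / (2*α), w.re / (2*α), ?_, hM⟩, ?_, ?_⟩
  · rcases Complex.ext_iff.not.mp hwne with h
    by_contra hc
    push_neg at hc
    obtain ⟨h1, h2⟩ := hc
    apply hwne
    have him : w.im = 0 := by
      field_simp at h1; simpa using h1
    have hre : w.re = 0 := by
      field_simp at h2; simpa using h2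
    exact Complex.ext (by simp [hre]) (by simp [him])
  · -- existence of t₀ with M t₀ ≠ 0
    rcases (by
      by_contra hc; push_neg at hc; exact hwne (Complex.ext hc.1 hc.2) :
      w.re ≠ 0 ∨ w.im ≠ 0) with h | h
    · refine ⟨Real.pi / (4 * α^2), ?_⟩
      rw [hM]
      have : 2 * α ^ 2 * (Real.pi / (4 * α^2)) = Real.pi / 2 := by
        field_simp; ring
      rw [this, Real.cos_pi_div_two, Real.sin_pi_div_two]
      simp only [mul_zero, zero_add, mul_one]
      exact div_ne_zero h h2α
    · refine ⟨0, ?_⟩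
      rw [hM]
      simp only [mul_zero, Real.cos_zero, Real.sin_zero, mul_one, add_zero]
      exact div_ne_zero h h2α
  · -- zero with nonvanishing derivative
    have habs : ‖w‖ ≠ 0 := by simpa using hwne
    set a : ℝ := w.im / (2*α) with ha
    set b : ℝ := w.re / (2*α) with hb
    set ts : ℝ := -(Complex.arg w) / (2 * α^2) with hts
    have hθs : 2 * α^2 * ts = -w.arg := by
      rw [hts]; field_simp
    have hcosarg : Real.cos w.arg = w.re / ‖w‖ := Complex.cos_arg hwne
    have hsinarg : Real.sin w.arg = w.im / ‖w‖ := Complex.sin_arg w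
    have hMfun : M = fun t₀ => a * Real.cos (2 * α ^ 2 * t₀) + b * Real.sin (2 * α ^ 2 * t₀) :=
      funext hM
    have hsq : w.re * w.re + w.im * w.im = ‖w‖ * ‖w‖ := by
      have := Complex.sq_norm w
      rw [Complex.normSq_apply] at this
      nlinarith [this]
    refine ⟨ts, ?_, ?_⟩
    · rw [hMfun]
      simp only [hθs, Real.cos_neg, Real.sin_neg, hcosarg, hsinarg, ha, hb]
      field_simp
      ring
    · have hc : HasDerivAt (fun t : ℝ => 2 * α^2 * t) (2 * α^2) ts := by
        simpa using (hasDerivAt_id ts).const_mul (2 * α^2)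
      have hd : HasDerivAt (fun t₀ : ℝ => a * Real.cos (2 * α ^ 2 * t₀)
          + b * Real.sin (2 * α ^ 2 * t₀))
          (a * (-Real.sin (2 * α^2 * ts) * (2 * α^2)) + b * (Real.cos (2 * α^2 * ts) * (2 * α^2)))
          ts := (hc.cos.const_mul a).add (hc.sin.const_mul b)
      rw [hMfun, hd.deriv]
      have hval : a * (-Real.sin (2 * α^2 * ts) * (2 * α^2))
          + b * (Real.cos (2 * α^2 * ts) * (2 * α^2)) = α * ‖w‖ := by
        rw [hθs, Real.cos_neg, Real.sin_neg, hcosarg, hsinarg, ha, hb]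
        field_simp
        nlinarith [hsq]
      rw [hval]
      exact mul_ne_zero (ne_of_gt hα) habs
end
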